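/- Let ρ be a d×d complex Hermitian positive semidefinite matrix with trace 1 and let t ∈ (−1,1) be real. Let S denote the swap operator on ℂ^d ⊗ ℂ^d and define cos(tρ) := (exp(i t ρ) + exp(−i t ρ))/2, where exp is the matrix exponential. Then |Re tr(ρ · cos(tρ)) − Re tr(exp(−i t S) · (ρ ⊗ ρ))| ≤ 2t², where ρ ⊗ ρ is the Kronecker product. -/

import Mathlib

open Matrix Kronecker ComplexOrder

/-- The swap operator on `ℂ^d ⊗ ℂ^d`. -/
def swapOp (d : ℕ) : Matrix (Fin d × Fin d) (Fin d × Fin d) ℂ :=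
  fun p q => if p.1 = q.2 ∧ p.2 = q.1 then 1 else 0

variable {n : Type*} [Fintype n] [DecidableEq n]

lemma herm_exp (A : Matrix n n ℂ) (hA : A.IsHermitian) (c : ℂ) :
    NormedSpace.exp (c • A) =
      (hA.eigenvectorUnitary : Matrix n n ℂ) *
        Matrix.diagonal (fun i => Complex.exp (c * (hA.eigenvalues i))) *
        star (hA.eigenvectorUnitary : Matrix n n ℂ) := by
  set U : Matrix n n ℂ := (hA.eigenvectorUnitary : Matrix n n ℂ) with hU
  have h1 : star U * U = 1 := (Matrix.mem_unitaryGroup_iff').mp hA.eigenvectorUnitary.2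
  have h2 : U * star U = 1 := (Matrix.mem_unitaryGroup_iff).mp hA.eigenvectorUnitary.2
  have hunit : IsUnit U := isUnit_iff_exists.mpr ⟨star U, h2, h1⟩
  have hinv : U⁻¹ = star U := Matrix.inv_eq_left_inv h1
  have hspec : A = U * Matrix.diagonal (RCLike.ofReal ∘ hA.eigenvalues) * star U :=
    hA.spectral_theorem
  have : c • A = U * (c • Matrix.diagonal (RCLike.ofReal ∘ hA.eigenvalues)) * U⁻¹ := by
    rw [hinv]
    conv_lhs => rw [hspec]
    simp [Matrix.mul_smul, Matrix.smul_mul]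
  rw [this, Matrix.exp_conj _ _ hunit, hinv]
  congr 1
  congr 1
  rw [← Matrix.diagonal_smul, Matrix.exp_diagonal]
  congr 1
  funext i
  rw [Pi.exp_def, ← Complex.exp_eq_exp_ℂ]
  simp [mul_comm]

lemma trace_herm_mul_exp (A : Matrix n n ℂ) (hA : A.IsHermitian) (c : ℂ) :
    (A * NormedSpace.exp (c • A)).trace =
      ∑ i, (hA.eigenvalues i : ℂ) * Complex.exp (c * (hA.eigenvalues i)) := by
  set U : Matrix n n ℂ := (hA.eigenvectorUnitary : Matrix n n ℂ) with hU
  have h1 : star U * U = 1 := (Matrix.mem_unitaryGroup_iff').mp hA.eigenvectorUnitary.2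
  set D : Matrix n n ℂ := Matrix.diagonal (RCLike.ofReal ∘ hA.eigenvalues) with hD
  set E : Matrix n n ℂ := Matrix.diagonal (fun i => Complex.exp (c * (hA.eigenvalues i))) with hE
  have hspec : A = U * D * star U := hA.spectral_theorem
  rw [herm_exp A hA c]
  have : A * (U * E * star U) = U * (D * E) * star U := by
    conv_lhs => rw [hspec]
    rw [show U * D * star U * (U * E * star U) = U * D * (star U * U) * E * star U by
      noncomm_ring]
    rw [h1, mul_one]
    noncomm_ring
  rw [this, Matrix.trace_mul_cycle, ← mul_assoc, h1, one_mul, hD, hE,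
    Matrix.diagonal_mul_diagonal, Matrix.trace_diagonal]
  simp

lemma exp_smul_involution (A : Matrix n n ℂ) (hA : A.IsHermitian) (h2 : A * A = 1) (c : ℂ) :
    NormedSpace.exp (c • A) = Complex.cosh c • (1 : Matrix n n ℂ) + Complex.sinh c • A := by
  set U : Matrix n n ℂ := (hA.eigenvectorUnitary : Matrix n n ℂ) with hU
  have h1 : star U * U = 1 := (Matrix.mem_unitaryGroup_iff').mp hA.eigenvectorUnitary.2
  have h1' : U * star U = 1 := (Matrix.mem_unitaryGroup_iff).mp hA.eigenvectorUnitary.2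
  set D : Matrix n n ℂ := Matrix.diagonal (RCLike.ofReal ∘ hA.eigenvalues) with hD
  have hspec : A = U * D * star U := hA.spectral_theorem
  have hDD : D * D = 1 := by
    have : A * A = U * (D * D) * star U := by
      conv_lhs => rw [hspec]
      rw [show U * D * star U * (U * D * star U) = U * D * (star U * U) * D * star U by
        noncomm_ring]
      rw [h1, mul_one]; noncomm_ring
    rw [h2] at this
    calc D * D = (star U * U) * (D * D) * (star U * U) := by rw [h1]; noncomm_ring
    _ = star U * (U * (D * D) * star U) * U := by noncomm_ring
    _ = 1 := by rw [← this, mul_one, h1]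
  have heig : ∀ i, hA.eigenvalues i = 1 ∨ hA.eigenvalues i = -1 := by
    intro i
    have := congr_fun (congr_fun hDD i) i
    rw [hD, Matrix.diagonal_mul_diagonal] at this
    simp only [Matrix.diagonal_apply_eq, Function.comp_apply, Matrix.one_apply_eq] at this
    have h' : ((hA.eigenvalues i * hA.eigenvalues i : ℝ) : ℂ) = 1 := by push_cast; exact this
    exact mul_self_eq_one_iff.mp (Complex.ofReal_eq_one.mp h')
  have hX : (Matrix.diagonal (fun i => Complex.cosh c + Complex.sinh c * (hA.eigenvalues i)) :
      Matrix n n ℂ) = Complex.cosh c • 1 + Complex.sinh c • D := by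
    ext i j
    rcases eq_or_ne i j with rfl | hij
    · simp [hD, mul_comm]
    · simp [hD, Matrix.diagonal_apply_ne _ hij, Matrix.one_apply_ne hij]
  have key : U * (Matrix.diagonal fun i => Complex.cosh c + Complex.sinh c *
        (hA.eigenvalues i)) * star U
      = Complex.cosh c • (1 : Matrix n n ℂ) + Complex.sinh c • A := by
    rw [hX, Matrix.mul_add, Matrix.add_mul, Matrix.mul_smul, Matrix.smul_mul,
      Matrix.mul_smul, Matrix.smul_mul, mul_one, h1', ← hspec]
  rw [herm_exp A hA c, ← key]
  congr 2
  rw [Matrix.diagonal_eq_diagonal_iff]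
  intro i
  rcases heig i with h | h <;> rw [h]
  · simp [Complex.cosh_add_sinh]
  · push_cast
    rw [mul_neg_one, mul_neg_one, ← sub_eq_add_neg, Complex.cosh_sub_sinh]

lemma swapOp_apply' (d : ℕ) (p q : Fin d × Fin d) :
    swapOp d p q = if q = (p.2, p.1) then 1 else 0 := by
  have h : (p.1 = q.2 ∧ p.2 = q.1) ↔ q = (p.2, p.1) := by
    rw [Prod.ext_iff]
    constructor <;> rintro ⟨a, b⟩ <;> exact ⟨b.symm, a.symm⟩
  simp [swapOp, h]

lemma swapOp_hermitian (d : ℕ) : (swapOp d).IsHermitian := by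
  ext p q
  rw [Matrix.conjTranspose_apply, swapOp_apply', swapOp_apply', apply_ite star, star_one,
    star_zero]
  congr 1
  simp only [eq_iff_iff]
  constructor <;> intro h <;> rw [h]

lemma swapOp_sq (d : ℕ) : swapOp d * swapOp d = 1 := by
  ext p q
  rw [Matrix.mul_apply]
  simp only [swapOp_apply', ite_mul, one_mul, zero_mul, Finset.sum_ite_eq',
    Finset.mem_univ, if_true]
  rcases p with ⟨a, b⟩
  rcases q with ⟨c, e⟩
  simp [Matrix.one_apply, Prod.ext_iff, and_comm, eq_comm]

lemma trace_swap_kron (d : ℕ) (ρ : Matrix (Fin d) (Fin d) ℂ) :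
    (swapOp d * (ρ ⊗ₖ ρ)).trace = (ρ * ρ).trace := by
  rw [Matrix.trace, Matrix.trace]
  simp only [Matrix.diag_apply, Matrix.mul_apply, swapOp_apply', ite_mul, one_mul, zero_mul,
    Finset.sum_ite_eq', Finset.mem_univ, if_true, Matrix.kroneckerMap_apply]
  rw [Fintype.sum_prod_type]
  refine Finset.sum_congr rfl fun i _ => ?_
  refine Finset.sum_congr rfl fun j _ => ?_
  ring

/-- the swap-exponentiation circuit output approximates
`Re tr(ρ cos(tρ))` with error at most `2t²`, where
`cos(tρ) = (exp(itρ) + exp(−itρ))/2` uses the matrix exponential. -/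
theorem stmt_8 (d : ℕ) (ρ : Matrix (Fin d) (Fin d) ℂ) (hρ : ρ.PosSemidef)
    (htr : ρ.trace = 1) (t : ℝ) (ht : t ∈ Set.Ioo (-1 : ℝ) 1) :
    |((ρ * ((2⁻¹ : ℂ) • (NormedSpace.exp ((Complex.I * t) • ρ) +
          NormedSpace.exp ((-(Complex.I * t)) • ρ)))).trace).re -
        ((NormedSpace.exp ((-(Complex.I * t)) • swapOp d) * (ρ ⊗ₖ ρ)).trace).re|
      ≤ 2 * t ^ 2 := by
  have hherm : ρ.IsHermitian := hρ.1
  set lam : Fin d → ℝ := hherm.eigenvalues with hlam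
  have hnn : ∀ i, 0 ≤ lam i := fun i => hρ.eigenvalues_nonneg i
  -- trace = sum of eigenvalues
  have htr' : ρ.trace = ∑ i, (lam i : ℂ) := by
    have h0 := trace_herm_mul_exp ρ hherm 0
    simpa [NormedSpace.exp_zero] using h0
  have hsum : ∑ i, lam i = 1 := by
    have h := htr'.symm.trans htr
    have : ((∑ i, lam i : ℝ) : ℂ) = ((1 : ℝ) : ℂ) := by push_cast; simpa using h
    exact_mod_cast this
  have hle1 : ∀ i, lam i ≤ 1 := by
    intro i
    rw [← hsum]
    exact Finset.single_le_sum (fun j _ => hnn j) (Finset.mem_univ i)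
  -- LHS trace
  have hL : ((ρ * ((2⁻¹ : ℂ) • (NormedSpace.exp ((Complex.I * t) • ρ) +
        NormedSpace.exp ((-(Complex.I * t)) • ρ)))).trace)
      = ((∑ i, lam i * Real.cos (t * lam i) : ℝ) : ℂ) := by
    rw [Matrix.mul_smul, Matrix.mul_add, Matrix.trace_smul, Matrix.trace_add,
      trace_herm_mul_exp ρ hherm (Complex.I * t), trace_herm_mul_exp ρ hherm (-(Complex.I * t)),
      ← Finset.sum_add_distrib]
    push_cast
    rw [Finset.smul_sum]
    refine Finset.sum_congr rfl fun i _ => ?_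
    rw [← mul_add,
      show (Complex.I * (t : ℂ)) * (lam i : ℂ) = ((t * lam i : ℝ) : ℂ) * Complex.I by
        push_cast; ring,
      show (-(Complex.I * (t : ℂ))) * (lam i : ℂ) = (-((t * lam i : ℝ) : ℂ)) * Complex.I by
        push_cast; ring,
      Complex.exp_mul_I, Complex.exp_mul_I, Complex.cos_neg, Complex.sin_neg,
      ← Complex.ofReal_cos]
    rw [smul_eq_mul]
    push_cast
    ring
  -- RHS trace
  have hSsq := swapOp_sq d
  have hSH := swapOp_hermitian d
  have hrr : ∃ r : ℝ, (ρ * ρ).trace = (r : ℂ) := by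
    have hst : star ((ρ * ρ).trace) = (ρ * ρ).trace := by
      rw [← Matrix.trace_conjTranspose, Matrix.conjTranspose_mul, hherm.eq]
    exact ⟨((ρ * ρ).trace).re, (Complex.conj_eq_iff_re.mp hst).symm⟩
  obtain ⟨r, hr⟩ := hrr
  have hR : ((NormedSpace.exp ((-(Complex.I * t)) • swapOp d) * (ρ ⊗ₖ ρ)).trace).re
      = Real.cos t := by
    rw [exp_smul_involution (swapOp d) hSH hSsq (-(Complex.I * t)),
      Matrix.add_mul, Matrix.smul_mul, Matrix.smul_mul, one_mul, Matrix.trace_add,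
      Matrix.trace_smul, Matrix.trace_smul, Matrix.trace_kronecker, htr, mul_one,
      trace_swap_kron, hr]
    have hcosh : Complex.cosh (-(Complex.I * t)) = ((Real.cos t : ℝ) : ℂ) := by
      rw [Complex.cosh_neg, mul_comm, Complex.cosh_mul_I, Complex.ofReal_cos]
    have hsinh : Complex.sinh (-(Complex.I * t)) = -(((Real.sin t : ℝ) : ℂ) * Complex.I) := by
      rw [Complex.sinh_neg, mul_comm, Complex.sinh_mul_I, Complex.ofReal_sin]
    rw [hcosh, hsinh]
    simp [Complex.add_re, Complex.smul_re, Complex.cos_ofReal_re]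
  rw [hL, hR, Complex.ofReal_re]
  -- now a real analysis estimate
  set A : ℝ := ∑ i, lam i * Real.cos (t * lam i) with hA
  have hAle : A ≤ 1 := by
    rw [hA, ← hsum]
    refine Finset.sum_le_sum fun i _ => ?_
    calc lam i * Real.cos (t * lam i) ≤ lam i * 1 :=
          mul_le_mul_of_nonneg_left (Real.cos_le_one _) (hnn i)
    _ = lam i := mul_one _
  have hAge : 1 - t ^ 2 / 2 ≤ A := by
    have : ∀ i, lam i - lam i * t ^ 2 / 2 ≤ lam i * Real.cos (t * lam i) := by
      intro i
      have h1 : lam i * (1 - (t * lam i) ^ 2 / 2) ≤ lam i * Real.cos (t * lam i) :=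
        mul_le_mul_of_nonneg_left Real.one_sub_sq_div_two_le_cos (hnn i)
      have hll : lam i * lam i ≤ 1 := by nlinarith [hle1 i, hnn i]
      nlinarith [h1, mul_nonneg (mul_nonneg (sq_nonneg t) (hnn i)) (sub_nonneg.mpr hll)]
    calc 1 - t ^ 2 / 2 = ∑ i, (lam i - lam i * t ^ 2 / 2) := by
          rw [Finset.sum_sub_distrib]
          rw [show ∑ i, lam i * t ^ 2 / 2 = (∑ i, lam i) * t ^ 2 / 2 by
            rw [← Finset.sum_div, ← Finset.sum_mul]]
          rw [hsum]; ring
    _ ≤ A := Finset.sum_le_sum fun i _ => this i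
  have hc1 : Real.cos t ≤ 1 := Real.cos_le_one t
  have hc2 : 1 - t ^ 2 / 2 ≤ Real.cos t := Real.one_sub_sq_div_two_le_cos
  have ht2 : 0 ≤ t ^ 2 := sq_nonneg t
  rw [abs_sub_le_iff]
  constructor <;> nlinarith
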